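/- Let f and i be affine permutations of period n such that the factorization f = i·(i⁻¹f) is length-additive (i.e. i ≤_R f). If T_L(f) ∩ T_R(f) = ∅, then ℓ(i⁻¹·f·i) = ℓ(f). -/

import Mathlib

open Finset

/-- `f` is an affine permutation of period `n`: an `n`-periodic bijection of `ℤ`. -/
def IsAffinePerm (n : ℕ) (f : Equiv.Perm ℤ) : Prop :=
  ∀ a : ℤ, f (a + n) = f a + n

/-- The length of an affine permutation of period `n`:
the number of pairs `(i, j)` with `i ∈ {1,…,n}`, `j ∈ ℤ`, `i < j` and `f i > f j`. -/
noncomputable def aLen (n : ℕ) (f : Equiv.Perm ℤ) : ℕ :=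
  Set.ncard {p : ℤ × ℤ | 1 ≤ p.1 ∧ p.1 ≤ (n : ℤ) ∧ p.1 < p.2 ∧ f p.2 < f p.1}

/-- `t` is the affine transposition `t_{a,b}` (period `n`): it swaps `a + jn` and `b + jn`
for all `j : ℤ` and fixes everything else; requires `a ≢ b (mod n)`. -/
def IsAffTranspAt (n : ℕ) (a b : ℤ) (t : Equiv.Perm ℤ) : Prop :=
  ¬ ((n : ℤ) ∣ b - a) ∧
    ∀ x : ℤ,
      ((n : ℤ) ∣ x - a → t x = x - a + b) ∧
      ((n : ℤ) ∣ x - b → t x = x - b + a) ∧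
      (¬ (n : ℤ) ∣ x - a → ¬ (n : ℤ) ∣ x - b → t x = x)

/-- `t` is an affine transposition of period `n`. -/
def IsAffTransp (n : ℕ) (t : Equiv.Perm ℤ) : Prop :=
  ∃ a b : ℤ, IsAffTranspAt n a b t

/-- The right associated reflections `T_R(f)`: affine transpositions `t` with `ℓ(f t) < ℓ(f)`. -/
def TR (n : ℕ) (f : Equiv.Perm ℤ) : Set (Equiv.Perm ℤ) :=
  {t | IsAffTransp n t ∧ aLen n (f * t) < aLen n f}

/-- The left associated reflections `T_L(f)`: affine transpositions `t` with `ℓ(t f) < ℓ(f)`. -/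
def TL (n : ℕ) (f : Equiv.Perm ℤ) : Set (Equiv.Perm ℤ) :=
  {t | IsAffTransp n t ∧ aLen n (t * f) < aLen n f}

/-- `u ≤_R f`: the factorization `f = u · (u⁻¹ f)` is length-additive. -/
def LeR (n : ℕ) (u f : Equiv.Perm ℤ) : Prop :=
  aLen n f = aLen n u + aLen n (u⁻¹ * f)

/-- `Bound k n`: bounded affine permutations, `a < f a ≤ a + n` with average shift `k`. -/
def Bound (k n : ℕ) : Set (Equiv.Perm ℤ) :=
  {f | IsAffinePerm n f ∧ (∀ a : ℤ, a < f a ∧ f a ≤ a + n) ∧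
    (∑ a ∈ Finset.Icc (1 : ℤ) (n : ℤ), (f a - a)) = (k : ℤ) * n}

/-- A permutation of `{1,…,n}` (modelled on `Fin n`) has type `(k,n)`:
`#{a : a ≤ π⁻¹ a} = k`. -/
def IsType (k n : ℕ) (π : Equiv.Perm (Fin n)) : Prop :=
  (Finset.univ.filter (fun a : Fin n => a ≤ π⁻¹ a)).card = k

/-- `f` is the lift of `π` : the affine permutation with `f a = π a` if `π a > a`
and `f a = π a + n` otherwise (identifying `v : Fin n` with the integer `v + 1 ∈ {1,…,n}`). -/
def IsLift (n : ℕ) (π : Equiv.Perm (Fin n)) (f : Equiv.Perm ℤ) : Prop :=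
  IsAffinePerm n f ∧ ∀ a : Fin n,
    f ((a.val : ℤ) + 1) =
      if (a.val : ℤ) < ((π a).val : ℤ) then ((π a).val : ℤ) + 1
      else ((π a).val : ℤ) + 1 + n

/-- The position of `a` in the cyclic (linear) order `<_i` on `Fin n` starting at `i`. -/
def cPos (n : ℕ) [NeZero n] (i a : Fin n) : ℕ := (a - i).val

/-- `a, b, c, d` is a cyclically ordered quadruple. -/
def CyclicOrdered (n : ℕ) [NeZero n] (a b c d : Fin n) : Prop :=
  0 < cPos n a b ∧ cPos n a b < cPos n a c ∧ cPos n a c < cPos n a d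

/-- Two subsets `I, J` of `Fin n` are weakly separated. -/
def WeaklySeparated (n : ℕ) [NeZero n] (I J : Finset (Fin n)) : Prop :=
  ¬ ∃ a b c d : Fin n, CyclicOrdered n a b c d ∧
      a ∈ I ∧ a ∉ J ∧ c ∈ I ∧ c ∉ J ∧ b ∈ J ∧ b ∉ I ∧ d ∈ J ∧ d ∉ I

/-- `(I_1,…,I_n)` (indexed by `Fin n`, cyclically) is a Grassmannlike necklace of type `(k,n)`
with removal permutation `ρ` and insertion permutation `ι`. -/
def IsGrassNecklace (n k : ℕ) [NeZero n] (I : Fin n → Finset (Fin n))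
    (ρ ι : Equiv.Perm (Fin n)) : Prop :=
  (∀ a : Fin n, (I a).card = k) ∧
    ∀ a : Fin n, ρ a ∈ I a ∧ I (a + 1) = insert (ι a) ((I a).erase (ρ a))

/-- Auxiliary construction of the Grassmannlike necklace with removal `ρ` and insertion `ι`. -/
def neckAux (n : ℕ) [NeZero n] (ρ ι : Equiv.Perm (Fin n)) : ℕ → Finset (Fin n)
  | 0 => Finset.univ.filter (fun a : Fin n => ρ⁻¹ a ≤ ι⁻¹ a)
  | m + 1 => insert (ι (Fin.ofNat n m)) ((neckAux n ρ ι m).erase (ρ (Fin.ofNat n m)))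

/-- The Grassmannlike necklace with removal permutation `ρ` and insertion permutation `ι`:
its first term is `{a : ρ⁻¹ a ≤ ι⁻¹ a}` and `I_{a+1} = (I_a ∖ {ρ a}) ∪ {ι a}`.
The forward Grassmann necklace of `π` is `necklace n 1 π`; the reverse Grassmann
necklace of `π` is `necklace n π⁻¹ 1`. -/
def necklace (n : ℕ) [NeZero n] (ρ ι : Equiv.Perm (Fin n)) (j : Fin n) : Finset (Fin n) :=
  neckAux n ρ ι j.val

/-- The sorted list of positions (in the order `<_i`) of the elements of `S`. -/
def sortedShift (n : ℕ) [NeZero n] (i : Fin n) (S : Finset (Fin n)) : List ℕ :=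
  (S.image (fun a => cPos n i a)).sort (· ≤ ·)

/-- `S ≤_i T` componentwise on `<_i`-sorted lists. -/
def leCyc (n : ℕ) [NeZero n] (i : Fin n) (S T : Finset (Fin n)) : Prop :=
  List.Forall₂ (· ≤ ·) (sortedShift n i S) (sortedShift n i T)

/-- The positroid `𝓜_π` of `π` (via Oh's theorem, taken as the definition). -/
def positroid (k n : ℕ) [NeZero n] (π : Equiv.Perm (Fin n)) : Set (Finset (Fin n)) :=
  {S | S.card = k ∧ ∀ j : Fin n, leCyc n j (necklace n 1 π j) S}

/-- `v` lies strictly inside the arc from `w` clockwise to `x`. -/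
def InArc (n : ℕ) [NeZero n] (w v x : Fin n) : Prop :=
  0 < cPos n w v ∧ cPos n w v < cPos n w x

/-- The chords `w ↦ x` and `y ↦ z` are noncrossing: they do not intersect,
including at boundary vertices. -/
def Noncrossing (n : ℕ) [NeZero n] (w x y z : Fin n) : Prop :=
  w ≠ y ∧ w ≠ z ∧ x ≠ y ∧ x ≠ z ∧
    ¬ ((InArc n w y x ∧ InArc n x z w) ∨ (InArc n w z x ∧ InArc n x y w))

/-- The (distinct) chords `w ↦ x` and `y ↦ z` are crossing. -/
def Crossing (n : ℕ) [NeZero n] (w x y z : Fin n) : Prop :=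
  (w ≠ y ∨ x ≠ z) ∧ ¬ Noncrossing n w x y z

/-- The noncrossing chords `w ↦ x` and `y ↦ z` are aligned:
`w <_w y <_w z <_w x`, or `w <_w x <_w z <_w y`, or `w = x` and `w <_w y <_w z`. -/
def Aligned (n : ℕ) [NeZero n] (w x y z : Fin n) : Prop :=
  Noncrossing n w x y z ∧
    ((0 < cPos n w y ∧ cPos n w y < cPos n w z ∧ cPos n w z < cPos n w x) ∨
     (0 < cPos n w x ∧ cPos n w x < cPos n w z ∧ cPos n w z < cPos n w y) ∨
     (w = x ∧ 0 < cPos n w y ∧ cPos n w y < cPos n w z))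

/-- A noncrossing toggle relating two Grassmannlike necklaces, each encoded by its pair
(removal permutation, insertion permutation): at some position `p`, the toggle is defined
(`ρ(p-1) ≠ ι(p)` and `ρ(p) ≠ ι(p-1)`), the chords `ρ(p-1) ↦ ι(p-1)` and `ρ(p) ↦ ι(p)`
are noncrossing, and the new permutations are obtained by right multiplication by the
transposition of positions `p-1, p`. -/
def NoncrossingToggle (n : ℕ) [NeZero n]
    (N N' : Equiv.Perm (Fin n) × Equiv.Perm (Fin n)) : Prop :=
  ∃ p : Fin n,
    N.1 (p - 1) ≠ N.2 p ∧ N.1 p ≠ N.2 (p - 1) ∧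
    Noncrossing n (N.1 (p - 1)) (N.2 (p - 1)) (N.1 p) (N.2 p) ∧
    N'.1 = N.1 * Equiv.swap (p - 1) p ∧ N'.2 = N.2 * Equiv.swap (p - 1) p

/-- The Plücker coordinate `Δ_I(M)`: the determinant of the `k × k` submatrix of `M`
on the columns indexed by `I` (in increasing order); junk value `0` if `I.card ≠ k`. -/
noncomputable def plucker (k n : ℕ) (M : Matrix (Fin k) (Fin n) ℂ) (I : Finset (Fin n)) : ℂ :=
  if h : I.card = k then
    Matrix.det (Matrix.of (fun r c : Fin k => M r ((I.orderIsoOfFin h) c).1))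
  else 0

/-- The matrix cone `Π°_π` over the open positroid variety of `π`: full-rank `k × n`
matrices with `Δ_J = 0` for `J ∉ 𝓜_π` and nonvanishing forward-necklace Plücker coordinates. -/
def openPos (k n : ℕ) [NeZero n] (π : Equiv.Perm (Fin n)) : Set (Matrix (Fin k) (Fin n) ℂ) :=
  {M | M.rank = k ∧
    (∀ J : Finset (Fin n), J.card = k → J ∉ positroid k n π → plucker k n M J = 0) ∧
    (∀ j : Fin n, plucker k n M (necklace n 1 π j) ≠ 0)}

/-- `N` is the right twist of `M` along the necklace `I` with removal permutation `ρ`: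
for all `a` and all `b ∈ I a`, `⟨N_a, M_b⟩ = δ_{b, ρ a}`. -/
def IsRightTwist (k n : ℕ) (I : Fin n → Finset (Fin n)) (ρ : Equiv.Perm (Fin n))
    (M N : Matrix (Fin k) (Fin n) ℂ) : Prop :=
  ∀ a : Fin n, ∀ b ∈ I a, (∑ j : Fin k, N j a * M j b) = if b = ρ a then 1 else 0

/-- `N` is the left twist of `M` along the necklace `I` with insertion permutation `ι`:
for all `a` and all `b ∈ I (a+1)`, `⟨N_a, M_b⟩ = δ_{b, ι a}`. -/
def IsLeftTwist (k n : ℕ) [NeZero n] (I : Fin n → Finset (Fin n)) (ι : Equiv.Perm (Fin n))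
    (M N : Matrix (Fin k) (Fin n) ℂ) : Prop :=
  ∀ a : Fin n, ∀ b ∈ I (a + 1), (∑ j : Fin k, N j a * M j b) = if b = ι a then 1 else 0

namespace AffAux

/-- The inversion set. -/
def D (n : ℕ) (f : Equiv.Perm ℤ) : Set (ℤ × ℤ) :=
  {p : ℤ × ℤ | 1 ≤ p.1 ∧ p.1 ≤ (n : ℤ) ∧ p.1 < p.2 ∧ f p.2 < f p.1}

lemma aLen_eq (n : ℕ) (f : Equiv.Perm ℤ) : aLen n f = (D n f).ncard := rfl

lemma affine_add_int {n : ℕ} {f : Equiv.Perm ℤ} (hf : IsAffinePerm n f)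
    (x m : ℤ) : f (x + m * n) = f x + m * n := by
  induction m using Int.induction_on with
  | zero => simp
  | succ k ih =>
      have h := hf (x + (k : ℤ) * n)
      have e : x + ((k : ℤ) + 1) * (n : ℤ) = (x + (k : ℤ) * n) + n := by ring
      rw [e, h, ih]; ring
  | pred k ih =>
      have h := hf (x + (-(k : ℤ) - 1) * n)
      have e1 : (x + (-(k : ℤ) - 1) * n) + (n : ℤ) = x + (-(k : ℤ)) * n := by ring
      rw [e1, ih] at h
      have e2 : f (x + (-(k : ℤ) - 1) * n) = f x + (-(k : ℤ)) * n - n := by linarith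
      rw [e2]; ring

lemma u_shift {n : ℕ} {u : Equiv.Perm ℤ} (hu : IsAffinePerm n u) {x y : ℤ} (m : ℤ)
    (h : y = x + m * n) : u y = u x + m * n := by rw [h, affine_add_int hu]

lemma affine_mul {n : ℕ} {f g : Equiv.Perm ℤ} (hf : IsAffinePerm n f)
    (hg : IsAffinePerm n g) : IsAffinePerm n (f * g) := fun a => by
  simp only [Equiv.Perm.mul_apply]; rw [hg a, hf (g a)]

lemma affine_inv {n : ℕ} {f : Equiv.Perm ℤ} (hf : IsAffinePerm n f) :
    IsAffinePerm n f⁻¹ := fun a => by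
  have h : f (f⁻¹ a + n) = a + n := by
    rw [hf (f⁻¹ a), Equiv.Perm.inv_def, Equiv.apply_symm_apply]
  calc f⁻¹ (a + n) = f⁻¹ (f (f⁻¹ a + n)) := by rw [h]
    _ = f⁻¹ a + n := f.symm_apply_apply _

/-- Canonical representative in `[1, n]`. -/
def nrm (n : ℕ) (a : ℤ) : ℤ := (a - 1) % (n : ℤ) + 1

lemma nrm_spec {n : ℕ} (hn : 0 < n) (a : ℤ) :
    1 ≤ nrm n a ∧ nrm n a ≤ (n : ℤ) ∧ ∃ m : ℤ, nrm n a = a + m * n := by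
  have hn' : (0 : ℤ) < n := by exact_mod_cast hn
  have h1 := Int.emod_nonneg (a - 1) hn'.ne'
  have h2 := Int.emod_lt_of_pos (a - 1) hn'
  refine ⟨by unfold nrm; omega, by unfold nrm; omega, ⟨-((a - 1) / n), ?_⟩⟩
  have h3 := Int.emod_add_mul_ediv (a - 1) (n : ℤ)
  unfold nrm
  linarith [h3]

lemma window_zero {n : ℕ} {x y m : ℤ} (h : y = x + m * n) (hx1 : 1 ≤ x) (hx2 : x ≤ (n : ℤ))
    (hy1 : 1 ≤ y) (hy2 : y ≤ (n : ℤ)) : m = 0 ∧ x = y := by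
  have hn' : (1 : ℤ) ≤ n := by linarith
  rcases lt_trichotomy m 0 with hm | hm | hm
  · exfalso
    have : m * (n : ℤ) ≤ (-1) * n := mul_le_mul_of_nonneg_right (by omega) (by linarith)
    linarith
  · refine ⟨hm, ?_⟩
    subst hm; linarith
  · exfalso
    have : (1 : ℤ) * n ≤ m * n := mul_le_mul_of_nonneg_right (by omega) (by linarith)
    linarith

lemma class_ne {n : ℕ} {f : Equiv.Perm ℤ} (hf : IsAffinePerm n f) {a b : ℤ}
    (hab : a < b) (hfab : f b < f a) : ¬ (n : ℤ) ∣ b - a := by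
  rintro ⟨m, hm⟩
  have hb : b = a + m * n := by linarith [hm, mul_comm (n : ℤ) m]
  have hfb : f b = f a + m * n := u_shift hf m hb
  have hpos : 0 < m * n := by linarith
  linarith

lemma D_zero (f : Equiv.Perm ℤ) : D 0 f = ∅ := by
  ext p
  simp only [D, Set.mem_setOf_eq, Set.mem_empty_iff_false, iff_false, Nat.cast_zero]
  rintro ⟨h1, h2, -, -⟩; omega

lemma D_finite {n : ℕ} {f : Equiv.Perm ℤ} (hf : IsAffinePerm n f) : (D n f).Finite := by
  rcases Nat.eq_zero_or_pos n with h0 | hn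
  · subst h0; rw [D_zero]; exact Set.finite_empty
  · set C : ℤ := ∑ r ∈ Finset.Icc (1 : ℤ) (n : ℤ), |f r - r| with hC
    have key : ∀ x : ℤ, |f x - x| ≤ C := by
      intro x
      obtain ⟨h1, h2, m, hm⟩ := nrm_spec hn x
      have hfx : f (nrm n x) = f x + m * n := u_shift hf m hm
      have e : |f x - x| = |f (nrm n x) - nrm n x| := by rw [hfx, hm]; ring_nf
      rw [e, hC]
      exact Finset.single_le_sum (f := fun r => |f r - r|)
        (fun i _ => abs_nonneg _) (Finset.mem_Icc.mpr ⟨h1, h2⟩)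
    apply Set.Finite.subset ((Finset.Icc (1 : ℤ) (n : ℤ) ×ˢ
      Finset.Icc (2 : ℤ) ((n : ℤ) + 2 * C)).finite_toSet)
    rintro ⟨a, b⟩ ⟨h1, h2, h3, h4⟩
    dsimp only at h1 h2 h3 h4
    have k1 := abs_le.mp (key a)
    have k2 := abs_le.mp (key b)
    simp only [Finset.coe_product, Set.mem_prod, Finset.mem_coe, Finset.mem_Icc]
    exact ⟨⟨h1, h2⟩, by omega, by omega⟩

section Decomp

variable {n : ℕ} {u v : Equiv.Perm ℤ}

/-- Case-1 part of `D n (u * v)` : pairs already inverted by `v`. -/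
def AA (n : ℕ) (u v : Equiv.Perm ℤ) : Set (ℤ × ℤ) := {p ∈ D n (u * v) | v p.2 < v p.1}

def BB (n : ℕ) (u v : Equiv.Perm ℤ) : Set (ℤ × ℤ) := {p ∈ D n (u * v) | v p.1 < v p.2}

/-- Normalizing map on pairs through `v`. -/
def Phi (n : ℕ) (v : Equiv.Perm ℤ) (p : ℤ × ℤ) : ℤ × ℤ :=
  (nrm n (v p.1), v p.2 + (nrm n (v p.1) - v p.1))

lemma AB_union : AA n u v ∪ BB n u v = D n (u * v) := by
  ext p
  simp only [AA, BB, Set.mem_union, Set.mem_sep_iff]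
  constructor
  · rintro (⟨h, -⟩ | ⟨h, -⟩) <;> exact h
  · intro h
    have h3 : p.1 < p.2 := h.2.2.1
    have hne : v p.1 ≠ v p.2 := fun he => by
      have := v.injective he; omega
    rcases hne.lt_or_gt with hlt | hgt
    · exact Or.inr ⟨h, hlt⟩
    · exact Or.inl ⟨h, hgt⟩

lemma AB_disj : Disjoint (AA n u v) (BB n u v) := by
  rw [Set.disjoint_left]
  rintro p ⟨-, h1⟩ ⟨-, h2⟩
  omega

lemma A_sub : AA n u v ⊆ D n v := by
  rintro p ⟨⟨h1, h2, h3, -⟩, h5⟩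
  exact ⟨h1, h2, h3, h5⟩

lemma A_fin (hu : IsAffinePerm n u) (hv : IsAffinePerm n v) : (AA n u v).Finite :=
  (D_finite (affine_mul hu hv)).subset (fun p hp => hp.1)

lemma B_fin (hu : IsAffinePerm n u) (hv : IsAffinePerm n v) : (BB n u v).Finite :=
  (D_finite (affine_mul hu hv)).subset (fun p hp => hp.1)

lemma Phi_maps (hn : 0 < n) (hu : IsAffinePerm n u) (hv : IsAffinePerm n v) :
    Set.MapsTo (Phi n v) (BB n u v) (D n u) := by
  rintro p ⟨⟨h1, h2, h3, h4⟩, h5⟩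
  obtain ⟨g1, g2, m, hm⟩ := nrm_spec hn (v p.1)
  simp only [Equiv.Perm.mul_apply] at h4
  have ePhi : Phi n v p = (v p.1 + m * n, v p.2 + m * n) := by
    simp only [Phi, Prod.mk.injEq]; omega
  rw [ePhi]
  refine ⟨by dsimp only; omega, by dsimp only; omega, by dsimp only; omega, ?_⟩
  dsimp only
  rw [u_shift hu m rfl, u_shift hu m rfl]
  omega

lemma Phi_inj (hn : 0 < n) (hv : IsAffinePerm n v) :
    Set.InjOn (Phi n v) (BB n u v) := by
  rintro p ⟨⟨hp1, hp2, hp3, -⟩, -⟩ q ⟨⟨hq1, hq2, hq3, -⟩, -⟩ heq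
  obtain ⟨-, -, mp, hmp⟩ := nrm_spec hn (v p.1)
  obtain ⟨-, -, mq, hmq⟩ := nrm_spec hn (v q.1)
  have e1 : v p.1 + mp * n = v q.1 + mq * n := by
    have := congrArg Prod.fst heq
    simp only [Phi] at this
    omega
  have e2 : v p.2 + mp * n = v q.2 + mq * n := by
    have := congrArg Prod.snd heq
    simp only [Phi] at this
    omega
  have hvp1 : v p.1 = v (q.1 + (mq - mp) * n) := by
    rw [affine_add_int hv]; linarith
  have hp1q : p.1 = q.1 + (mq - mp) * n := v.injective hvp1
  obtain ⟨hm0, hxy⟩ := window_zero hp1q hq1 hq2 hp1 hp2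
  have hvp2 : v p.2 = v q.2 := by
    have : (mq - mp) * (n : ℤ) = 0 := by rw [hm0]; ring
    have hmm : mp * (n : ℤ) = mq * n := by linarith [this]
    linarith [e2]
  have : p.2 = q.2 := v.injective hvp2
  exact Prod.ext hxy.symm this

lemma count_eq (hu : IsAffinePerm n u) (hv : IsAffinePerm n v) :
    aLen n (u * v) = (AA n u v).ncard + (BB n u v).ncard := by
  rw [aLen_eq, ← AB_union, Set.ncard_union_eq AB_disj (A_fin hu hv) (B_fin hu hv)]

lemma nocancel_of_eq (hn : 0 < n) (hu : IsAffinePerm n u) (hv : IsAffinePerm n v)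
    (heq : aLen n (u * v) = aLen n u + aLen n v) :
    ∀ a b : ℤ, a < b → v b < v a → (u * v) b < (u * v) a := by
  have hBle : (BB n u v).ncard ≤ (D n u).ncard :=
    Set.ncard_le_ncard_of_injOn _ (Phi_maps hn hu hv) (Phi_inj hn hv) (D_finite hu)
  have hAle : (AA n u v).ncard ≤ (D n v).ncard :=
    Set.ncard_le_ncard A_sub (D_finite hv)
  have hcnt : (D n (u * v)).ncard = (AA n u v).ncard + (BB n u v).ncard := by
    rw [← aLen_eq]; exact count_eq hu hv
  have heq' : (D n (u * v)).ncard = (D n u).ncard + (D n v).ncard := by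
    rw [← aLen_eq, ← aLen_eq, ← aLen_eq]; exact heq
  have hAeq : (D n v).ncard ≤ (AA n u v).ncard := by omega
  have hA : AA n u v = D n v := Set.eq_of_subset_of_ncard_le A_sub hAeq (D_finite hv)
  intro a b hab hvv
  obtain ⟨g1, g2, m, hm⟩ := nrm_spec hn a
  have hmem : (a + m * n, b + m * n) ∈ D n v := by
    refine ⟨by omega, by omega, by omega, ?_⟩
    rw [u_shift hv m rfl, u_shift hv m rfl]
    omega
  rw [← hA] at hmem
  have hw := hmem.1.2.2.2
  dsimp only at hw
  have huv : IsAffinePerm n (u * v) := affine_mul hu hv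
  rw [u_shift huv m rfl, u_shift huv m rfl] at hw
  omega

lemma eq_of_nocancel (hn : 0 < n) (hu : IsAffinePerm n u) (hv : IsAffinePerm n v)
    (hnc : ∀ a b : ℤ, a < b → v b < v a → u (v b) < u (v a)) :
    aLen n (u * v) = aLen n u + aLen n v := by
  have hA : AA n u v = D n v := by
    refine Set.Subset.antisymm A_sub ?_
    rintro p ⟨h1, h2, h3, h4⟩
    have hw : u (v p.2) < u (v p.1) := hnc p.1 p.2 h3 h4
    exact ⟨⟨h1, h2, h3, by simpa [Equiv.Perm.mul_apply] using hw⟩, h4⟩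
  have hB : Phi n v '' (BB n u v) = D n u := by
    refine Set.Subset.antisymm (Set.mapsTo_iff_image_subset.mp (Phi_maps hn hu hv)) ?_
    rintro ⟨c, d⟩ ⟨h1, h2, h3, h4⟩
    dsimp only at h1 h2 h3 h4
    set a0 := v⁻¹ c with ha0
    set b0 := v⁻¹ d with hb0
    have hva : v a0 = c := v.apply_symm_apply c
    have hvb : v b0 = d := v.apply_symm_apply d
    have hab0 : a0 < b0 := by
      rcases lt_trichotomy a0 b0 with h | h | h
      · exact h
      · exfalso; rw [h] at hva; rw [hva] at hvb; omega
      · exfalso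
        have := hnc b0 a0 h (by omega)
        rw [hva, hvb] at this; omega
    obtain ⟨g1, g2, m, hm⟩ := nrm_spec hn a0
    refine ⟨(a0 + m * n, b0 + m * n), ⟨⟨by omega, by omega, by omega, ?_⟩, ?_⟩, ?_⟩
    · simp only [Equiv.Perm.mul_apply]
      rw [u_shift hv m rfl, u_shift hv m rfl, hva, hvb,
        u_shift hu m rfl, u_shift hu m rfl]
      omega
    · rw [u_shift hv m rfl, u_shift hv m rfl, hva, hvb]
      omega
    · have hvc : v (a0 + m * n) = c + m * n := by rw [u_shift hv m rfl, hva]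
      have hvd : v (b0 + m * n) = d + m * n := by rw [u_shift hv m rfl, hvb]
      simp only [Phi, hvc, hvd]
      have hnc2 : nrm n (c + m * n) = c := by
        obtain ⟨k1, k2, m', hm'⟩ := nrm_spec hn (c + m * n)
        have : nrm n (c + m * n) = c + (m + m') * n := by rw [hm']; ring
        obtain ⟨-, hx⟩ := window_zero this h1 h2 k1 k2
        omega
      rw [hnc2]
      ext <;> simp <;> ring
  have hBcard : (BB n u v).ncard = (D n u).ncard := by
    rw [← hB, Set.ncard_image_of_injOn (Phi_inj hn hv)]
  rw [count_eq hu hv, hA, hBcard, aLen_eq, aLen_eq]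
  omega

end Decomp

lemma aLen_le_inv {n : ℕ} {f : Equiv.Perm ℤ} (hn : 0 < n) (hf : IsAffinePerm n f) :
    aLen n f ≤ aLen n f⁻¹ := by
  rw [aLen_eq, aLen_eq]
  set Psi : ℤ × ℤ → ℤ × ℤ := fun p => (nrm n (f p.2), f p.1 + (nrm n (f p.2) - f p.2))
    with hPsi
  have hfinv : IsAffinePerm n f⁻¹ := affine_inv hf
  apply Set.ncard_le_ncard_of_injOn Psi ?_ ?_ (D_finite hfinv)
  · rintro p ⟨h1, h2, h3, h4⟩
    obtain ⟨g1, g2, m, hm⟩ := nrm_spec hn (f p.2)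
    have e1 : f⁻¹ (f p.2 + m * n) = p.2 + m * n := by
      rw [show f p.2 + m * n = f (p.2 + m * n) from (u_shift hf m rfl).symm]
      exact f.symm_apply_apply _
    have e2 : f⁻¹ (f p.1 + m * n) = p.1 + m * n := by
      rw [show f p.1 + m * n = f (p.1 + m * n) from (u_shift hf m rfl).symm]
      exact f.symm_apply_apply _
    refine ⟨by simpa [Psi] using g1, by simpa [Psi] using g2, ?_, ?_⟩
    · simp only [Psi]; omega
    · simp only [Psi]
      rw [show f p.1 + (nrm n (f p.2) - f p.2) = f p.1 + m * n by omega,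
        show nrm n (f p.2) = f p.2 + m * n from hm, e1, e2]
      omega
  · rintro p ⟨hp1, hp2, hp3, -⟩ q ⟨hq1, hq2, hq3, -⟩ heq
    obtain ⟨-, -, mp, hmp⟩ := nrm_spec hn (f p.2)
    obtain ⟨-, -, mq, hmq⟩ := nrm_spec hn (f q.2)
    have e1 : f p.2 + mp * n = f q.2 + mq * n := by
      have := congrArg Prod.fst heq
      simp only [Psi] at this
      omega
    have e2 : f p.1 + mp * n = f q.1 + mq * n := by
      have := congrArg Prod.snd heq
      simp only [Psi] at this
      omega
    have hfp1 : f p.1 = f (q.1 + (mq - mp) * n) := by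
      rw [affine_add_int hf]; linarith
    have hp1q : p.1 = q.1 + (mq - mp) * n := f.injective hfp1
    obtain ⟨hm0, hxy⟩ := window_zero hp1q hq1 hq2 hp1 hp2
    have hmm : mp * (n : ℤ) = mq * n := by
      have : (mq - mp) * (n : ℤ) = 0 := by rw [hm0]; ring
      linarith
    have : p.2 = q.2 := f.injective (by linarith [e1] : f p.2 = f q.2)
    exact Prod.ext hxy.symm this

lemma aLen_inv {n : ℕ} {f : Equiv.Perm ℤ} (hf : IsAffinePerm n f) :
    aLen n f⁻¹ = aLen n f := by
  rcases Nat.eq_zero_or_pos n with h0 | hn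
  · subst h0; rw [aLen_eq, aLen_eq, D_zero, D_zero]
  · have h1 := aLen_le_inv hn hf
    have h2 := aLen_le_inv hn (affine_inv hf)
    rw [inv_inv] at h2
    omega

section Transp

variable {n : ℕ} {c d : ℤ}

def tfun (n : ℕ) (c d x : ℤ) : ℤ :=
  if (n : ℤ) ∣ x - c then x - c + d else if (n : ℤ) ∣ x - d then x - d + c else x

lemma tfun_c {x : ℤ} (h : (n : ℤ) ∣ x - c) : tfun n c d x = x - c + d := if_pos h

lemma tfun_d (hnd : ¬ (n : ℤ) ∣ d - c) {x : ℤ} (h : (n : ℤ) ∣ x - d) :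
    tfun n c d x = x - d + c := by
  have hx : ¬ (n : ℤ) ∣ x - c := fun h' => hnd (by
    have := dvd_sub h' h
    simpa [show x - c - (x - d) = d - c by ring] using this)
  rw [tfun, if_neg hx, if_pos h]

lemma tfun_o {x : ℤ} (h1 : ¬ (n : ℤ) ∣ x - c) (h2 : ¬ (n : ℤ) ∣ x - d) :
    tfun n c d x = x := by rw [tfun, if_neg h1, if_neg h2]

lemma tfun_invol (hnd : ¬ (n : ℤ) ∣ d - c) : Function.Involutive (tfun n c d) := by
  intro x
  by_cases h1 : (n : ℤ) ∣ x - c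
  · rw [tfun_c h1]
    have hd : (n : ℤ) ∣ (x - c + d) - d := by simpa using h1
    rw [tfun_d hnd hd]; ring
  · by_cases h2 : (n : ℤ) ∣ x - d
    · rw [tfun_d hnd h2]
      have hc : (n : ℤ) ∣ (x - d + c) - c := by simpa using h2
      rw [tfun_c hc]; ring
    · rw [tfun_o h1 h2, tfun_o h1 h2]

def transp (n : ℕ) (c d : ℤ) (hnd : ¬ (n : ℤ) ∣ d - c) : Equiv.Perm ℤ :=
  (tfun_invol hnd).toPerm

lemma transp_apply (hnd : ¬ (n : ℤ) ∣ d - c) (x : ℤ) :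
    transp n c d hnd x = tfun n c d x := rfl

lemma transp_inv (hnd : ¬ (n : ℤ) ∣ d - c) :
    (transp n c d hnd)⁻¹ = transp n c d hnd := by
  ext x
  have := (tfun_invol hnd) x
  calc (transp n c d hnd)⁻¹ x
      = (transp n c d hnd)⁻¹ (transp n c d hnd (tfun n c d x)) := by
        rw [transp_apply, this]
    _ = tfun n c d x := (transp n c d hnd).symm_apply_apply _
    _ = transp n c d hnd x := rfl

lemma transp_affine (hnd : ¬ (n : ℤ) ∣ d - c) : IsAffinePerm n (transp n c d hnd) := by
  intro a
  show tfun n c d (a + n) = tfun n c d a + n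
  have ec : (a + (n : ℤ)) - c = (a - c) + 1 * n := by ring
  have ed : (a + (n : ℤ)) - d = (a - d) + 1 * n := by ring
  have hc : ((n : ℤ) ∣ (a + (n : ℤ)) - c) ↔ ((n : ℤ) ∣ a - c) := by
    rw [ec]; simp
  have hd : ((n : ℤ) ∣ (a + (n : ℤ)) - d) ↔ ((n : ℤ) ∣ a - d) := by
    rw [ed]; simp
  by_cases h1 : (n : ℤ) ∣ a - c
  · rw [tfun_c h1, tfun_c (hc.mpr h1)]; ring
  · by_cases h2 : (n : ℤ) ∣ a - d
    · rw [tfun_d hnd h2, tfun_d hnd (hd.mpr h2)]; ring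
    · rw [tfun_o h1 h2, tfun_o (fun h => h1 (hc.mp h)) (fun h => h2 (hd.mp h))]

lemma transp_isAffTranspAt (hnd : ¬ (n : ℤ) ∣ d - c) :
    IsAffTranspAt n c d (transp n c d hnd) :=
  ⟨hnd, fun x => ⟨fun h => tfun_c h, fun h => tfun_d hnd h, fun h1 h2 => tfun_o h1 h2⟩⟩

/-- Kernel of the exchange argument: a "flipped" inversion of `u * t` is an inversion of
`u`. -/
lemma flip_down {u : Equiv.Perm ℤ} (hu : IsAffinePerm n u) (hnd : ¬ (n : ℤ) ∣ d - c)
    (hcd : c < d) (hud : u d < u c) {a b : ℤ} (hab : a < b)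
    (hflip : tfun n c d b < tfun n c d a)
    (hinv : u (tfun n c d b) < u (tfun n c d a)) : u b < u a := by
  by_cases hac : (n : ℤ) ∣ a - c
  · obtain ⟨p, hp⟩ := hac
    rw [tfun_c ⟨p, hp⟩] at hflip hinv
    have ea : u a = u c + p * n := u_shift hu p (by linarith [mul_comm (n : ℤ) p])
    have ea' : u (a - c + d) = u d + p * n :=
      u_shift hu p (by linarith [mul_comm (n : ℤ) p])
    by_cases hbc : (n : ℤ) ∣ b - c
    · obtain ⟨q, hq⟩ := hbc
      rw [tfun_c ⟨q, hq⟩] at hflip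
      omega
    · by_cases hbd : (n : ℤ) ∣ b - d
      · obtain ⟨q, hq⟩ := hbd
        rw [tfun_d hnd ⟨q, hq⟩] at hinv
        have eb : u b = u d + q * n := u_shift hu q (by linarith [mul_comm (n : ℤ) q])
        have eb' : u (b - d + c) = u c + q * n :=
          u_shift hu q (by linarith [mul_comm (n : ℤ) q])
        rw [eb', ea'] at hinv
        rw [eb, ea]
        nlinarith [hinv]
      · rw [tfun_o hbc hbd] at hinv
        rw [ea]
        linarith [hinv, ea']
  · by_cases had : (n : ℤ) ∣ a - d
    · rw [tfun_d hnd had] at hflip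
      by_cases hbc : (n : ℤ) ∣ b - c
      · rw [tfun_c hbc] at hflip
        linarith
      · by_cases hbd : (n : ℤ) ∣ b - d
        · rw [tfun_d hnd hbd] at hflip
          linarith
        · rw [tfun_o hbc hbd] at hflip
          linarith
    · rw [tfun_o hac had] at hflip hinv
      by_cases hbc : (n : ℤ) ∣ b - c
      · rw [tfun_c hbc] at hflip
        linarith
      · by_cases hbd : (n : ℤ) ∣ b - d
        · obtain ⟨q, hq⟩ := hbd
          rw [tfun_d hnd ⟨q, hq⟩] at hinv
          have eb : u b = u d + q * n := u_shift hu q (by linarith [mul_comm (n : ℤ) q])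
          have eb' : u (b - d + c) = u c + q * n :=
            u_shift hu q (by linarith [mul_comm (n : ℤ) q])
          rw [eb'] at hinv
          rw [eb]
          linarith
        · rw [tfun_o hbc hbd] at hflip
          linarith

end Transp

section Exchange

variable {n : ℕ} {c d : ℤ}

def FF (n : ℕ) (c d : ℤ) (p : ℤ × ℤ) : ℤ × ℤ :=
  if tfun n c d p.1 < tfun n c d p.2 then
    (nrm n (tfun n c d p.1),
      tfun n c d p.2 + (nrm n (tfun n c d p.1) - tfun n c d p.1))
  else p

lemma FF_pos {p : ℤ × ℤ} (h : tfun n c d p.1 < tfun n c d p.2) :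
    FF n c d p = (nrm n (tfun n c d p.1),
      tfun n c d p.2 + (nrm n (tfun n c d p.1) - tfun n c d p.1)) := if_pos h

lemma FF_neg {p : ℤ × ℤ} (h : ¬ tfun n c d p.1 < tfun n c d p.2) :
    FF n c d p = p := if_neg h

lemma aLen_mul_transp_lt {u : Equiv.Perm ℤ} (hn : 0 < n)
    (hu : IsAffinePerm n u) (hnd : ¬ (n : ℤ) ∣ d - c) (hcd : c < d) (hud : u d < u c) :
    aLen n (u * transp n c d hnd) < aLen n u := by
  set t := transp n c d hnd with ht
  have htaff : IsAffinePerm n t := transp_affine hnd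
  have tfun_shift : ∀ x m : ℤ, tfun n c d (x + m * n) = tfun n c d x + m * n :=
    fun x m => affine_add_int htaff x m
  have tfun_inj : ∀ x y : ℤ, tfun n c d x = tfun n c d y → x = y :=
    fun x y h => t.injective h
  have tfun_tfun : ∀ x : ℤ, tfun n c d (tfun n c d x) = x := tfun_invol hnd
  have happ : ∀ x : ℤ, (u * t) x = u (tfun n c d x) := fun x => rfl
  obtain ⟨k1, k2, m0, hm0⟩ := nrm_spec hn c
  set p0 : ℤ × ℤ := (c + m0 * n, d + m0 * n) with hp0def
  have hp0 : p0 ∈ D n u := by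
    refine ⟨by simp only [hp0def]; omega, by simp only [hp0def]; omega,
      by simp only [hp0def]; omega, ?_⟩
    simp only [hp0def]
    rw [u_shift hu m0 rfl, u_shift hu m0 rfl]
    omega
  have hmaps : Set.MapsTo (FF n c d) (D n (u * t)) (D n u \ {p0}) := by
    intro p hp
    obtain ⟨h1, h2, h3, h4⟩ := hp
    rw [happ, happ] at h4
    by_cases hlt : tfun n c d p.1 < tfun n c d p.2
    · obtain ⟨g1, g2, m, hm⟩ := nrm_spec hn (tfun n c d p.1)
      have eF : FF n c d p = (tfun n c d p.1 + m * n, tfun n c d p.2 + m * n) := by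
        rw [FF_pos hlt]
        simp only [Prod.mk.injEq]
        omega
      rw [eF]
      constructor
      · refine ⟨by omega, by omega, by omega, ?_⟩
        show u (tfun n c d p.2 + m * n) < u (tfun n c d p.1 + m * n)
        rw [u_shift hu m rfl, u_shift hu m rfl]
        omega
      · simp only [Set.mem_singleton_iff, hp0def, Prod.mk.injEq, not_and]
        intro e1 e2
        exfalso
        have hrel : (m0 - m) * (n : ℤ) = m0 * n - m * n := by ring
        have hta : tfun n c d p.1 = c + (m0 - m) * n := by omega
        have htb : tfun n c d p.2 = d + (m0 - m) * n := by omega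
        have hdva : (n : ℤ) ∣ (c + (m0 - m) * n) - c := ⟨m0 - m, by ring⟩
        have hdvb : (n : ℤ) ∣ (d + (m0 - m) * n) - d := ⟨m0 - m, by ring⟩
        have ha' : p.1 = d + (m0 - m) * n := by
          have hi := tfun_tfun p.1
          rw [hta, tfun_c hdva] at hi
          omega
        have hb' : p.2 = c + (m0 - m) * n := by
          have hi := tfun_tfun p.2
          rw [htb, tfun_d hnd hdvb] at hi
          omega
        omega
    · have hne : tfun n c d p.2 ≠ tfun n c d p.1 := fun h => by
        have := tfun_inj _ _ h
        omega
      have hflip : tfun n c d p.2 < tfun n c d p.1 :=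
        lt_of_le_of_ne (not_lt.mp hlt) hne
      have hba : u p.2 < u p.1 := flip_down hu hnd hcd hud h3 hflip h4
      rw [FF_neg hlt]
      refine ⟨⟨h1, h2, h3, hba⟩, ?_⟩
      simp only [Set.mem_singleton_iff, hp0def]
      intro e
      have e1 : p.1 = c + m0 * n := by rw [e]
      have e2 : p.2 = d + m0 * n := by rw [e]
      have hdva : (n : ℤ) ∣ p.1 - c := ⟨m0, by rw [e1]; ring⟩
      have hdvb : (n : ℤ) ∣ p.2 - d := ⟨m0, by rw [e2]; ring⟩
      have eta : tfun n c d p.1 = d + m0 * n := by rw [tfun_c hdva]; omega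
      have etb : tfun n c d p.2 = c + m0 * n := by rw [tfun_d hnd hdvb]; omega
      rw [eta, etb, u_shift hu m0 rfl, u_shift hu m0 rfl] at h4
      omega
  have hinj : Set.InjOn (FF n c d) (D n (u * t)) := by
    intro p hp q hq heq
    obtain ⟨hp1, hp2, hp3, hp4⟩ := hp
    obtain ⟨hq1, hq2, hq3, hq4⟩ := hq
    by_cases hpl : tfun n c d p.1 < tfun n c d p.2 <;>
      by_cases hql : tfun n c d q.1 < tfun n c d q.2
    · rw [FF_pos hpl, FF_pos hql] at heq
      obtain ⟨-, -, mp, hmp⟩ := nrm_spec hn (tfun n c d p.1)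
      obtain ⟨-, -, mq, hmq⟩ := nrm_spec hn (tfun n c d q.1)
      have e1 : tfun n c d p.1 + mp * n = tfun n c d q.1 + mq * n := by
        have := congrArg Prod.fst heq
        dsimp only at this
        omega
      have e2 : tfun n c d p.2 + mp * n = tfun n c d q.2 + mq * n := by
        have := congrArg Prod.snd heq
        dsimp only at this
        omega
      have hrel : (mq - mp) * (n : ℤ) = mq * n - mp * n := by ring
      have e1' : tfun n c d p.1 = tfun n c d (q.1 + (mq - mp) * n) := by
        rw [tfun_shift]
        omega
      have hp1q : p.1 = q.1 + (mq - mp) * n := tfun_inj _ _ e1'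
      obtain ⟨hk0, hxy⟩ := window_zero hp1q hq1 hq2 hp1 hp2
      have hmm : mp * (n : ℤ) = mq * n := by
        have : (mq - mp) * (n : ℤ) = 0 := by rw [hk0]; ring
        omega
      have e2' : tfun n c d p.2 = tfun n c d q.2 := by omega
      exact Prod.ext hxy.symm (tfun_inj _ _ e2')
    · exfalso
      rw [FF_pos hpl, FF_neg hql] at heq
      obtain ⟨-, -, mp, hmp⟩ := nrm_spec hn (tfun n c d p.1)
      have e1 : q.1 = tfun n c d p.1 + mp * n := by
        have := congrArg Prod.fst heq
        dsimp only at this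
        omega
      have e2 : q.2 = tfun n c d p.2 + mp * n := by
        have := congrArg Prod.snd heq
        dsimp only at this
        omega
      have f1 : tfun n c d q.1 = p.1 + mp * n := by
        rw [e1, tfun_shift, tfun_tfun]
      have f2 : tfun n c d q.2 = p.2 + mp * n := by
        rw [e2, tfun_shift, tfun_tfun]
      omega
    · exfalso
      rw [FF_neg hpl, FF_pos hql] at heq
      obtain ⟨-, -, mq, hmq⟩ := nrm_spec hn (tfun n c d q.1)
      have e1 : p.1 = tfun n c d q.1 + mq * n := by
        have := congrArg Prod.fst heq
        dsimp only at this
        omega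
      have e2 : p.2 = tfun n c d q.2 + mq * n := by
        have := congrArg Prod.snd heq
        dsimp only at this
        omega
      have f1 : tfun n c d p.1 = q.1 + mq * n := by
        rw [e1, tfun_shift, tfun_tfun]
      have f2 : tfun n c d p.2 = q.2 + mq * n := by
        rw [e2, tfun_shift, tfun_tfun]
      omega
    · rw [FF_neg hpl, FF_neg hql] at heq
      exact heq
  have hfin : (D n u \ {p0}).Finite := (D_finite hu).subset Set.diff_subset
  have hle1 : (D n (u * t)).ncard ≤ (D n u \ {p0}).ncard :=
    Set.ncard_le_ncard_of_injOn _ hmaps hinj hfin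
  have hle2 : (D n u \ {p0}).ncard = (D n u).ncard - 1 :=
    Set.ncard_diff_singleton_of_mem hp0
  have hpos : 0 < (D n u).ncard := (Set.ncard_pos (D_finite hu)).mpr ⟨p0, hp0⟩
  rw [aLen_eq, aLen_eq]
  omega

lemma mem_TR {f : Equiv.Perm ℤ} (hn : 0 < n) (hf : IsAffinePerm n f)
    (hnd : ¬ (n : ℤ) ∣ d - c) (hcd : c < d) (hfd : f d < f c) :
    transp n c d hnd ∈ TR n f :=
  ⟨⟨c, d, transp_isAffTranspAt hnd⟩, aLen_mul_transp_lt hn hf hnd hcd hfd⟩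

lemma mem_TL {f : Equiv.Perm ℤ} (hn : 0 < n) (hf : IsAffinePerm n f)
    (hnd : ¬ (n : ℤ) ∣ d - c) (hcd : c < d) (hfi : f⁻¹ d < f⁻¹ c) :
    transp n c d hnd ∈ TL n f := by
  refine ⟨⟨c, d, transp_isAffTranspAt hnd⟩, ?_⟩
  have htf : IsAffinePerm n (transp n c d hnd * f) :=
    affine_mul (transp_affine hnd) hf
  have h1 : aLen n (transp n c d hnd * f) = aLen n (f⁻¹ * transp n c d hnd) := by
    rw [← aLen_inv htf, mul_inv_rev, transp_inv]
  rw [h1, ← aLen_inv hf]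
  exact aLen_mul_transp_lt hn (affine_inv hf) hnd hcd hfi

end Exchange

end AffAux

open AffAux

/-- If `i ≤_R f` and `T_L(f) ∩ T_R(f) = ∅`, then `ℓ(i⁻¹·f·i) = ℓ(f)`. -/
theorem conjugate_length_eq_of_reflections_disjoint
    (n : ℕ) (f i : Equiv.Perm ℤ)
    (hf : IsAffinePerm n f) (hi : IsAffinePerm n i)
    (hle : LeR n i f) (hdisj : TL n f ∩ TR n f = ∅) :
    aLen n (i⁻¹ * f * i) = aLen n f := by
  rcases Nat.eq_zero_or_pos n with h0 | hn
  · subst h0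
    rw [aLen_eq, aLen_eq, D_zero, D_zero]
  · set g := i⁻¹ * f with hg
    have hgaff : IsAffinePerm n g := affine_mul (affine_inv hi) hf
    have hfe : f = i * g := by rw [hg, mul_inv_cancel_left]
    have hle' : aLen n f = aLen n i + aLen n g := hle
    have hadd : aLen n (i * g) = aLen n i + aLen n g := by rw [← hfe]; exact hle'
    have NC1 : ∀ a b : ℤ, a < b → g b < g a → f b < f a := by
      intro a b hab hgb
      have h := nocancel_of_eq hn hi hgaff hadd a b hab hgb
      rwa [← hfe] at h
    have einv : g⁻¹ * i⁻¹ = f⁻¹ := by rw [hg]; group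
    have hadd' : aLen n (g⁻¹ * i⁻¹) = aLen n g⁻¹ + aLen n i⁻¹ := by
      rw [einv, aLen_inv hf, aLen_inv hgaff, aLen_inv hi, hle']
      omega
    have NC2 : ∀ a b : ℤ, a < b → i⁻¹ b < i⁻¹ a → f⁻¹ b < f⁻¹ a := by
      intro a b hab hib
      have h := nocancel_of_eq hn (affine_inv hgaff) (affine_inv hi) hadd' a b hab hib
      rwa [einv] at h
    have NC3 : ∀ a b : ℤ, a < b → i b < i a → g (i b) < g (i a) := by
      by_contra hcon
      push_neg at hcon
      obtain ⟨a, b, hab, hiba, hge⟩ := hcon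
      set c := i b with hc
      set d := i a with hd
      have hcd : c < d := hiba
      have hne : d ≠ c := fun h => by
        have := i.injective (hd.trans (h.trans hc.symm) : i a = i b)
        omega
      have hgd : g d < g c := lt_of_le_of_ne hge (fun h => hne (g.injective h))
      have hnd : ¬ (n : ℤ) ∣ d - c := class_ne hgaff hcd hgd
      have hfd : f d < f c := NC1 c d hcd hgd
      have htr := mem_TR hn hf hnd hcd hfd
      have hia : i⁻¹ d = a := by rw [hd, Equiv.Perm.inv_def, Equiv.symm_apply_apply]
      have hib : i⁻¹ c = b := by rw [hc, Equiv.Perm.inv_def, Equiv.symm_apply_apply]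
      have hfi : f⁻¹ d < f⁻¹ c := NC2 c d hcd (by rw [hia, hib]; exact hab)
      have htl := mem_TL hn hf hnd hcd hfi
      exact Set.eq_empty_iff_forall_notMem.mp hdisj _ ⟨htl, htr⟩
    have hgi : aLen n (g * i) = aLen n g + aLen n i := eq_of_nocancel hn hgaff hi NC3
    have e2 : i⁻¹ * f * i = g * i := by rw [hg]
    rw [e2, hgi, hle']
    omega
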